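/- The reflection I : Cat → Preord, sending a small category to the preorder on its objects where x ≤ y iff there exists a morphism x → y, has stable units: I preserves every pullback of small categories in which the lower-right corner is a preorder (a category with at most one morphism between any two objects). -/

import Mathlib

open CategoryTheory Limits
universe u

/-- The objects of the preorder reflection of a category. -/
structure ThinObj (D : Type u) [Category.{u} D] : Type u where
  obj : D

instance (D : Type u) [Category.{u} D] : Preorder (ThinObj D) where
  le f g := Nonempty (f.obj ⟶ g.obj)
  le_refl f := ⟨𝟙 _⟩
  le_trans f g h u v := u.elim fun a => v.elim fun b => ⟨a ≫ b⟩

/-- The action of the preorder reflection on functors. -/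
def thinFunctor {C D : Type u} [Category.{u} C] [Category.{u} D] (F : C ⥤ D) :
    ThinObj C ⥤ ThinObj D where
  obj x := ⟨F.obj x.obj⟩
  map u := homOfLE (u.le.elim fun a => ⟨F.map a⟩)
  map_id _ := Subsingleton.elim _ _
  map_comp _ _ := Subsingleton.elim _ _

/-- The preorder reflection `I : Cat → Preord ⊆ Cat`, sending a small category to the
preorder on its objects with `x ≤ y` iff there exists a morphism `x ⟶ y`
(all parallel morphisms are identified). -/
def preordReflection : Cat.{u, u} ⥤ Cat.{u, u} where
  obj D := Cat.of (ThinObj D)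
  map F := (thinFunctor F.toFunctor).toCatHom
  map_id D := Cat.ext (CategoryTheory.Functor.ext (fun _ => rfl) (fun _ _ _ => @Subsingleton.elim _ (inferInstanceAs (Subsingleton (ULift (PLift _)))) _ _))
  map_comp F G := Cat.ext (CategoryTheory.Functor.ext (fun _ => rfl) (fun _ _ _ => @Subsingleton.elim _ (inferInstanceAs (Subsingleton (ULift (PLift _)))) _ _))


/-- Walking arrow in `Type u`. -/
inductive Two' : Type u | zero | one

instance : Preorder Two'.{u} where
  le x y := x = Two'.zero ∨ y = Two'.one
  le_refl x := by cases x
                  · exact Or.inl rfl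
                  · exact Or.inr rfl
  le_trans x y z h1 h2 := by
    rcases h1 with h1 | h1
    · exact Or.inl h1
    · rcases h2 with h2 | h2
      · rw [h1] at h2; exact Two'.noConfusion h2
      · exact Or.inr h2

def twoFunctor {C : Type u} [Category.{u} C] {c c' : C} (u : c ⟶ c') : Two'.{u} ⥤ C where
  obj x := match x with | .zero => c | .one => c'
  map {x y} m := match x, y with
    | .zero, .zero => 𝟙 c
    | .zero, .one => u
    | .one, .one => 𝟙 c'
    | .one, .zero => False.elim (by rcases leOfHom m with h | h <;> exact Two'.noConfusion h)
  map_id x := by cases x <;> rfl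
  map_comp {x y z} m n := by
    cases x <;> cases y <;> cases z <;>
      first
        | (rcases leOfHom m with h | h <;> exact Two'.noConfusion h)
        | (rcases leOfHom n with h | h <;> exact Two'.noConfusion h)
        | simp

def ptF {C : Cat.{u, u}} (c : C) : Cat.of (Discrete PUnit.{u + 1}) ⟶ C :=
  ((Functor.const (Discrete PUnit.{u + 1})).obj c).toCatHom

lemma ptF_comp {C D : Cat.{u, u}} (c : C) (F : C ⟶ D) : ptF c ≫ F = ptF (F.toFunctor.obj c) := by
  refine Cat.ext (CategoryTheory.Functor.ext (fun _ => rfl) (fun x y m => ?_))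
  exact (F.toFunctor.map_id c).trans (by show 𝟙 _ = eqToHom (rfl : F.toFunctor.obj c = _) ≫ 𝟙 (F.toFunctor.obj c) ≫ eqToHom rfl; simp)

section
variable {P A B X : Cat.{u, u}} (fst : P ⟶ A) (snd : P ⟶ B) (f : A ⟶ X) (g : B ⟶ X)

noncomputable def chosen (hpb : IsPullback fst snd f g) (a : A) (b : B)
    (hab : f.toFunctor.obj a = g.toFunctor.obj b) : P :=
  (hpb.lift (ptF a) (ptF b) (by rw [ptF_comp, ptF_comp, hab])).toFunctor.obj ⟨PUnit.unit⟩

lemma chosen_fst (hpb : IsPullback fst snd f g) (a : A) (b : B) (hab : f.toFunctor.obj a = g.toFunctor.obj b) :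
    fst.toFunctor.obj (chosen fst snd f g hpb a b hab) = a :=
  Functor.congr_obj (congrArg Cat.Hom.toFunctor (hpb.lift_fst (ptF a) (ptF b) (by rw [ptF_comp, ptF_comp, hab]))) ⟨PUnit.unit⟩

lemma chosen_snd (hpb : IsPullback fst snd f g) (a : A) (b : B) (hab : f.toFunctor.obj a = g.toFunctor.obj b) :
    snd.toFunctor.obj (chosen fst snd f g hpb a b hab) = b :=
  Functor.congr_obj (congrArg Cat.Hom.toFunctor (hpb.lift_snd (ptF a) (ptF b) (by rw [ptF_comp, ptF_comp, hab]))) ⟨PUnit.unit⟩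

lemma chosen_unique (hpb : IsPullback fst snd f g) (a : A) (b : B) (hab : f.toFunctor.obj a = g.toFunctor.obj b)
    (q : P) (h1 : fst.toFunctor.obj q = a) (h2 : snd.toFunctor.obj q = b) :
    q = chosen fst snd f g hpb a b hab :=
  Functor.congr_obj
    (congrArg Cat.Hom.toFunctor (hpb.hom_ext (k := ptF q)
      (by rw [ptF_comp, h1, hpb.lift_fst])
      (by rw [ptF_comp, h2, hpb.lift_snd]))) ⟨PUnit.unit⟩

lemma chosen_hom (hthin : Quiver.IsThin X) (hpb : IsPullback fst snd f g)
    {a a' : A} {b b' : B} (u : a ⟶ a') (v : b ⟶ b')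
    (hab : f.toFunctor.obj a = g.toFunctor.obj b) (hab' : f.toFunctor.obj a' = g.toFunctor.obj b') :
    Nonempty (chosen fst snd f g hpb a b hab ⟶ chosen fst snd f g hpb a' b' hab') := by
  let tu : Cat.of Two'.{u} ⟶ A := (twoFunctor u).toCatHom
  let tv : Cat.of Two'.{u} ⟶ B := (twoFunctor v).toCatHom
  have w : tu ≫ f = tv ≫ g := by
    refine Cat.ext (CategoryTheory.Functor.ext (fun x => ?_) (fun x y m => (hthin _ _).elim _ _))
    cases x
    · exact hab
    · exact hab'
  have h0f : fst.toFunctor.obj ((hpb.lift _ _ w).toFunctor.obj Two'.zero) = a :=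
    Functor.congr_obj (congrArg Cat.Hom.toFunctor (hpb.lift_fst _ _ w)) Two'.zero
  have h0s : snd.toFunctor.obj ((hpb.lift _ _ w).toFunctor.obj Two'.zero) = b :=
    Functor.congr_obj (congrArg Cat.Hom.toFunctor (hpb.lift_snd _ _ w)) Two'.zero
  have h1f : fst.toFunctor.obj ((hpb.lift _ _ w).toFunctor.obj Two'.one) = a' :=
    Functor.congr_obj (congrArg Cat.Hom.toFunctor (hpb.lift_fst _ _ w)) Two'.one
  have h1s : snd.toFunctor.obj ((hpb.lift _ _ w).toFunctor.obj Two'.one) = b' :=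
    Functor.congr_obj (congrArg Cat.Hom.toFunctor (hpb.lift_snd _ _ w)) Two'.one
  have e0 := chosen_unique fst snd f g hpb a b hab _ h0f h0s
  have e1 := chosen_unique fst snd f g hpb a' b' hab' _ h1f h1s
  exact ⟨eqToHom e0.symm ≫ (hpb.lift _ _ w).toFunctor.map (show (Two'.zero : Two'.{u}) ⟶ Two'.one from homOfLE (Or.inl rfl)) ≫ eqToHom e1⟩

end


def thinHom {D : Type u} [Category.{u} D] {x y : ThinObj D} (h : Nonempty (x.obj ⟶ y.obj)) :
    x ⟶ y := homOfLE h

lemma thinLe {D : Type u} [Category.{u} D] {x y : ThinObj D} (h : x ⟶ y) :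
    Nonempty (x.obj ⟶ y.obj) := h.le

section
variable {P A B X : Cat.{u, u}} (fst : P ⟶ A) (snd : P ⟶ B) (f : A ⟶ X) (g : B ⟶ X)

noncomputable def liftFun (hthin : Quiver.IsThin X) (hpb : IsPullback fst snd f g)
    (s : PullbackCone (preordReflection.map f) (preordReflection.map g)) :
    ↑s.pt ⥤ ThinObj ↑P where
  obj w := ⟨chosen fst snd f g hpb _ _ (congrArg ThinObj.obj (Functor.congr_obj (congrArg Cat.Hom.toFunctor s.condition) w))⟩
  map {w w'} m :=
    thinHom ((thinLe (s.fst.toFunctor.map m)).elim fun uu =>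
      (thinLe (s.snd.toFunctor.map m)).elim fun vv =>
        chosen_hom fst snd f g hthin hpb uu vv
          (congrArg ThinObj.obj (Functor.congr_obj (congrArg Cat.Hom.toFunctor s.condition) w))
          (congrArg ThinObj.obj (Functor.congr_obj (congrArg Cat.Hom.toFunctor s.condition) w')))
  map_id _ := Subsingleton.elim _ _
  map_comp _ _ := Subsingleton.elim _ _

end

/-- Theorem: the reflection of `Cat` into `Preord` has stable units: the reflector
preserves every pullback of small categories whose lower-right corner is a preorder
(a thin category). -/
theorem preordReflection_stable_units
    {P A B X : Cat.{u, u}} (fst : P ⟶ A) (snd : P ⟶ B) (f : A ⟶ X) (g : B ⟶ X)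
    (hthin : Quiver.IsThin X)
    (hpb : IsPullback fst snd f g) :
    IsPullback (preordReflection.map fst) (preordReflection.map snd)
      (preordReflection.map f) (preordReflection.map g) := by
  have comm : preordReflection.map fst ≫ preordReflection.map f =
      preordReflection.map snd ≫ preordReflection.map g := by
    rw [← preordReflection.map_comp, ← preordReflection.map_comp, hpb.w]
  refine IsPullback.of_isLimit' ⟨comm⟩ ?_
  refine PullbackCone.IsLimit.mk _
    (fun s => ((liftFun fst snd f g hthin hpb s).toCatHom : s.pt ⟶ preordReflection.obj P))
    (fun s => ?_) (fun s => ?_) (fun s m hm1 hm2 => ?_)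
  · refine Cat.ext (CategoryTheory.Functor.ext (fun w => ?_) (fun _ _ _ => @Subsingleton.elim _ (inferInstanceAs (Subsingleton (ULift (PLift _)))) _ _))
    exact congrArg ThinObj.mk (chosen_fst fst snd f g hpb _ _ (congrArg ThinObj.obj (Functor.congr_obj (congrArg Cat.Hom.toFunctor s.condition) w)))
  · refine Cat.ext (CategoryTheory.Functor.ext (fun w => ?_) (fun _ _ _ => @Subsingleton.elim _ (inferInstanceAs (Subsingleton (ULift (PLift _)))) _ _))
    exact congrArg ThinObj.mk (chosen_snd fst snd f g hpb _ _ (congrArg ThinObj.obj (Functor.congr_obj (congrArg Cat.Hom.toFunctor s.condition) w)))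
  · refine Cat.ext (CategoryTheory.Functor.ext (fun w => ?_) (fun _ _ _ => @Subsingleton.elim _ (inferInstanceAs (Subsingleton (ULift (PLift _)))) _ _))
    exact congrArg ThinObj.mk (chosen_unique fst snd f g hpb _ _ (congrArg ThinObj.obj (Functor.congr_obj (congrArg Cat.Hom.toFunctor s.condition) w)) _
      (congrArg ThinObj.obj (Functor.congr_obj (congrArg Cat.Hom.toFunctor hm1) w))
      (congrArg ThinObj.obj (Functor.congr_obj (congrArg Cat.Hom.toFunctor hm2) w)))
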